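/- The function α(r,s) = |r^{1/p} - s^{1/p}|^p is convex on (0,∞) × (0,∞); in particular, for positive reals r₁, r₂, s₁, s₂ one has α((r₁+r₂)/2, (s₁+s₂)/2) ≤ (1/2)α(r₁,s₁) + (1/2)α(r₂,s₂), with equality only if r₁ s₂ = r₂ s₁. -/

import Mathlib

open Set

lemma abs_rpow_sconv {p : ℝ} (hp : 1 < p) :
    StrictConvexOn ℝ univ (fun t : ℝ => |t| ^ p) := by
  have hIci : StrictConvexOn ℝ (Ici (0:ℝ)) (fun t : ℝ => |t| ^ p) :=
    (strictConvexOn_rpow hp).congr (fun t ht => by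
      simp only [abs_of_nonneg (mem_Ici.mp ht)])
  have habs : ∀ u v : ℝ, u < 0 → 0 < v → |u + v| < |u| + |v| := by
    intro u v hu hv
    rcases le_or_gt 0 (u + v) with h | h
    · rw [abs_of_nonneg h, abs_of_neg hu, abs_of_pos hv]; linarith
    · rw [abs_of_neg h, abs_of_neg hu, abs_of_pos hv]; linarith
  have key : ∀ x y a b : ℝ, x < 0 → 0 < y → 0 < a → 0 < b → a + b = 1 →
      |a * x + b * y| ^ p < a * |x| ^ p + b * |y| ^ p := by
    intro x y a b hx hy ha hb hab
    have h1 : |a * x + b * y| < a * |x| + b * |y| := by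
      have := habs (a * x) (b * y) (by nlinarith) (by nlinarith)
      rwa [abs_mul, abs_mul, abs_of_pos ha, abs_of_pos hb] at this
    have h2 : |a * x + b * y| ^ p < (a * |x| + b * |y|) ^ p :=
      Real.rpow_lt_rpow (abs_nonneg _) h1 (by linarith)
    have h3 : (a * |x| + b * |y|) ^ p ≤ a * |x| ^ p + b * |y| ^ p := by
      have := (convexOn_rpow hp.le).2 (mem_Ici.mpr (abs_nonneg x))
        (mem_Ici.mpr (abs_nonneg y)) ha.le hb.le hab
      simpa [smul_eq_mul] using this
    linarith
  have negcase : ∀ x y a b : ℝ, x ≤ 0 → y ≤ 0 → x ≠ y → 0 < a → 0 < b → a + b = 1 →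
      |a * x + b * y| ^ p < a * |x| ^ p + b * |y| ^ p := by
    intro x y a b hx hy hxy ha hb hab
    have hxy' : (-x) ≠ (-y) := fun h => hxy (by linarith [neg_injective h])
    have := hIci.2 (mem_Ici.mpr (by linarith : (0:ℝ) ≤ -x))
      (mem_Ici.mpr (by linarith : (0:ℝ) ≤ -y)) hxy' ha hb hab
    simp only [smul_eq_mul, abs_neg] at this
    have e : a * -x + b * -y = -(a * x + b * y) := by ring
    rw [e, abs_neg] at this
    exact this
  refine ⟨convex_univ, fun x _ y _ hxy a b ha hb hab => ?_⟩
  simp only [smul_eq_mul]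
  rcases le_or_gt 0 x with hx | hx <;> rcases le_or_gt 0 y with hy | hy
  · have := hIci.2 (mem_Ici.mpr hx) (mem_Ici.mpr hy) hxy ha hb hab
    simpa [smul_eq_mul] using this
  · rcases eq_or_lt_of_le hx with h0 | h0
    · exact negcase x y a b h0.symm.le hy.le hxy ha hb hab
    · have := key y x b a hy h0 hb ha (by linarith)
      have e : b * y + a * x = a * x + b * y := by ring
      rw [e] at this; linarith
  · rcases eq_or_lt_of_le hy with h0 | h0
    · exact negcase x y a b hx.le h0.symm.le hxy ha hb hab
    · exact key x y a b hx h0 ha hb hab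
  · exact negcase x y a b hx.le hy.le hxy ha hb hab
lemma core {p : ℝ} (hp : 1 < p) {x y l : ℝ} (hl : 1 < l) :
    l * |x| ^ p - (l - 1) * |y| ^ p ≤ |l * x - (l - 1) * y| ^ p ∧
      (l * |x| ^ p - (l - 1) * |y| ^ p = |l * x - (l - 1) * y| ^ p → x = y) := by
  set z := l * x - (l - 1) * y with hz
  have hl0 : (0:ℝ) < l := by linarith
  by_cases hzy : z = y
  · have hxy : x = y := by
      have : l * x = l * y := by rw [hz] at hzy; linarith
      exact mul_left_cancel₀ (ne_of_gt hl0) this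
    subst hxy
    have : z = x := hzy
    rw [this]
    have he : l * |x| ^ p - (l - 1) * |x| ^ p = |x| ^ p := by ring
    exact ⟨by linarith, fun _ => rfl⟩
  · have hs := (abs_rpow_sconv hp).2 (mem_univ z) (mem_univ y) hzy
      (div_pos one_pos hl0) (div_pos (by linarith : (0:ℝ) < l - 1) hl0) (by field_simp; ring)
    simp only [smul_eq_mul] at hs
    have hcomb : 1/l * z + (l-1)/l * y = x := by
      rw [hz]; field_simp; try ring
    rw [hcomb] at hs
    -- hs : |x|^p < 1/l * |z|^p + (l-1)/l * |y|^p
    have hlt : l * |x| ^ p - (l - 1) * |y| ^ p < |z| ^ p := by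
      have := mul_lt_mul_of_pos_left hs hl0
      have e : l * (1/l * |z|^p + (l-1)/l * |y|^p) = |z|^p + (l-1)*|y|^p := by
        field_simp; try ring
      rw [e] at this; linarith
    exact ⟨hlt.le, fun h => absurd h hlt.ne⟩

lemma core2 {p : ℝ} (hp : 1 < p) {a b a₀ b₀ : ℝ} (ha : 0 < a) (hb : 0 < b)
    (ha₀ : 0 < a₀) (hb₀ : 0 < b₀) (h : b₀ < a₀) :
    (a₀ - b₀) ^ (p-1) * (a ^ p / a₀ ^ (p-1)) - (a₀ - b₀) ^ (p-1) * (b ^ p / b₀ ^ (p-1))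
        ≤ |a - b| ^ p ∧
      ((a₀ - b₀) ^ (p-1) * (a ^ p / a₀ ^ (p-1)) - (a₀ - b₀) ^ (p-1) * (b ^ p / b₀ ^ (p-1))
        = |a - b| ^ p → a * b₀ = a₀ * b) := by
  set c := a₀ - b₀ with hc
  have hc0 : 0 < c := by simp [hc]; linarith
  have hl : 1 < a₀ / c := by
    rw [lt_div_iff₀ hc0]; simp [hc]; linarith
  obtain ⟨hle, heq⟩ := core hp (x := a/a₀) (y := b/b₀) hl
  have hl1 : a₀/c - 1 = b₀/c := by field_simp; ring
  -- identities
  have hxabs : |a/a₀| = a/a₀ := abs_of_pos (by positivity)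
  have hyabs : |b/b₀| = b/b₀ := abs_of_pos (by positivity)
  have hcomb : a₀/c * (a/a₀) - b₀/c * (b/b₀) = (a - b)/c := by
    field_simp
  rw [hxabs, hyabs, hl1, hcomb] at hle heq
  -- multiply by c^p
  have hcp : (0:ℝ) < c ^ p := Real.rpow_pos_of_pos hc0 p
  have e1 : c ^ p * (a₀/c * (a/a₀) ^ p) = c ^ (p-1) * (a ^ p / a₀ ^ (p-1)) := by
    rw [Real.div_rpow ha.le ha₀.le]
    rw [show c ^ p = c ^ (p-1) * c from by
      rw [← Real.rpow_add_one hc0.ne' (p-1)]; ring_nf]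
    rw [show a₀ ^ p = a₀ ^ (p-1) * a₀ from by
      rw [← Real.rpow_add_one ha₀.ne' (p-1)]; ring_nf]
    field_simp
  have e2 : c ^ p * (b₀/c * (b/b₀) ^ p) = c ^ (p-1) * (b ^ p / b₀ ^ (p-1)) := by
    rw [Real.div_rpow hb.le hb₀.le]
    rw [show c ^ p = c ^ (p-1) * c from by
      rw [← Real.rpow_add_one hc0.ne' (p-1)]; ring_nf]
    rw [show b₀ ^ p = b₀ ^ (p-1) * b₀ from by
      rw [← Real.rpow_add_one hb₀.ne' (p-1)]; ring_nf]
    field_simp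
  have e3 : c ^ p * |(a - b)/c| ^ p = |a - b| ^ p := by
    rw [abs_div, abs_of_pos hc0, Real.div_rpow (abs_nonneg _) hc0.le]
    field_simp
  constructor
  · have := mul_le_mul_of_nonneg_left hle hcp.le
    rw [mul_sub, e1, e2, e3] at this
    exact this
  · intro hEq
    have hEq' : a₀/c * (a/a₀) ^ p - b₀/c * (b/b₀) ^ p = |(a-b)/c| ^ p := by
      have h2 : c ^ p * (a₀/c * (a/a₀) ^ p - b₀/c * (b/b₀) ^ p) = c ^ p * |(a-b)/c| ^ p := by
        rw [mul_sub, e1, e2, e3]; exact hEq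
      exact mul_left_cancel₀ hcp.ne' h2
    have hxy := heq hEq'
    have : a * b₀ = a₀ * b := by
      field_simp at hxy
      linarith
    exact this
lemma exists_support {p : ℝ} (hp : 1 < p) {r₀ s₀ : ℝ} (hr₀ : 0 < r₀) (hs₀ : 0 < s₀) :
    ∃ A B : ℝ, A * r₀ + B * s₀ = |r₀ ^ (1/p) - s₀ ^ (1/p)| ^ p ∧
      ∀ r s : ℝ, 0 < r → 0 < s →
        A * r + B * s ≤ |r ^ (1/p) - s ^ (1/p)| ^ p ∧
        (A * r + B * s = |r ^ (1/p) - s ^ (1/p)| ^ p → r * s₀ = r₀ * s) := by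
  have hp0 : (0:ℝ) < p := by linarith
  have hpow : ∀ r : ℝ, 0 < r → (r ^ (1/p)) ^ p = r := fun r hr => by
    rw [← Real.rpow_mul hr.le, one_div, inv_mul_cancel₀ hp0.ne', Real.rpow_one]
  set a₀ := r₀ ^ (1/p) with ha₀d
  set b₀ := s₀ ^ (1/p) with hb₀d
  have ha₀ : 0 < a₀ := Real.rpow_pos_of_pos hr₀ _
  have hb₀ : 0 < b₀ := Real.rpow_pos_of_pos hs₀ _
  have hr₀e : a₀ ^ p = r₀ := hpow r₀ hr₀
  have hs₀e : b₀ ^ p = s₀ := hpow s₀ hs₀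
  rcases lt_trichotomy a₀ b₀ with hlt | heq | hgt
  · -- a₀ < b₀
    refine ⟨-((b₀ - a₀) ^ (p-1) / a₀ ^ (p-1)), (b₀ - a₀) ^ (p-1) / b₀ ^ (p-1), ?_, ?_⟩
    · rw [← hr₀e, ← hs₀e]
      have e1 : a₀ ^ p = a₀ ^ (p-1) * a₀ := by
        rw [← Real.rpow_add_one ha₀.ne' (p-1)]; ring_nf
      have e2 : b₀ ^ p = b₀ ^ (p-1) * b₀ := by
        rw [← Real.rpow_add_one hb₀.ne' (p-1)]; ring_nf
      have e3 : |a₀ - b₀| ^ p = (b₀ - a₀) ^ (p-1) * (b₀ - a₀) := by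
        rw [abs_of_neg (by linarith : a₀ - b₀ < 0), neg_sub,
          ← Real.rpow_add_one (by linarith : b₀ - a₀ ≠ 0) (p-1)]
        ring_nf
      rw [e1, e2, e3]
      have hA : a₀ ^ (p-1) ≠ 0 := (Real.rpow_pos_of_pos ha₀ _).ne'
      have hB : b₀ ^ (p-1) ≠ 0 := (Real.rpow_pos_of_pos hb₀ _).ne'
      field_simp
      ring
    · intro r s hr hs
      set a := r ^ (1/p) with had
      set b := s ^ (1/p) with hbd
      have ha : 0 < a := Real.rpow_pos_of_pos hr _
      have hb : 0 < b := Real.rpow_pos_of_pos hs _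
      obtain ⟨h1, h2⟩ := core2 hp hb ha hb₀ ha₀ hlt
      rw [abs_sub_comm] at h1 h2
      have eL : -((b₀ - a₀) ^ (p-1) / a₀ ^ (p-1)) * r + (b₀ - a₀) ^ (p-1) / b₀ ^ (p-1) * s
          = (b₀ - a₀) ^ (p-1) * (b ^ p / b₀ ^ (p-1)) - (b₀ - a₀) ^ (p-1) * (a ^ p / a₀ ^ (p-1)) := by
        rw [← hpow r hr, ← hpow s hs, ← had, ← hbd]; ring
      rw [eL]
      refine ⟨h1, fun hE => ?_⟩
      have hba := h2 hE
      -- b * a₀ = b₀ * a  →  r * s₀ = r₀ * s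
      have : a * b₀ = a₀ * b := by linarith [mul_comm b a₀, mul_comm b₀ a]
      calc r * s₀ = a ^ p * b₀ ^ p := by rw [hpow r hr, hs₀e]
        _ = (a * b₀) ^ p := (Real.mul_rpow ha.le hb₀.le).symm
        _ = (a₀ * b) ^ p := by rw [this]
        _ = a₀ ^ p * b ^ p := Real.mul_rpow ha₀.le hb.le
        _ = r₀ * s := by rw [hr₀e, hpow s hs]
  · -- a₀ = b₀
    have hrs : r₀ = s₀ := by rw [← hr₀e, ← hs₀e, heq]
    refine ⟨0, 0, ?_, ?_⟩
    · rw [heq, sub_self, abs_zero, Real.zero_rpow hp0.ne']; ring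
    · intro r s hr hs
      constructor
      · have := Real.rpow_nonneg (abs_nonneg (r ^ (1/p) - s ^ (1/p))) p
        linarith
      · intro hE
        have h0 : |r ^ (1/p) - s ^ (1/p)| ^ p = 0 := by linarith
        have h1 : |r ^ (1/p) - s ^ (1/p)| = 0 := by
          by_contra hne
          have : (0:ℝ) < |r ^ (1/p) - s ^ (1/p)| :=
            lt_of_le_of_ne (abs_nonneg _) (Ne.symm hne)
          exact absurd h0 (Real.rpow_pos_of_pos this p).ne'
        have h2 : r ^ (1/p) = s ^ (1/p) := by
          have := abs_eq_zero.mp h1; linarith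
        have h3 : r = s := by
          rw [← hpow r hr, ← hpow s hs, h2]
        rw [h3, hrs]; ring
  · -- b₀ < a₀
    refine ⟨(a₀ - b₀) ^ (p-1) / a₀ ^ (p-1), -((a₀ - b₀) ^ (p-1) / b₀ ^ (p-1)), ?_, ?_⟩
    · rw [← hr₀e, ← hs₀e]
      have e1 : a₀ ^ p = a₀ ^ (p-1) * a₀ := by
        rw [← Real.rpow_add_one ha₀.ne' (p-1)]; ring_nf
      have e2 : b₀ ^ p = b₀ ^ (p-1) * b₀ := by
        rw [← Real.rpow_add_one hb₀.ne' (p-1)]; ring_nf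
      have e3 : |a₀ - b₀| ^ p = (a₀ - b₀) ^ (p-1) * (a₀ - b₀) := by
        rw [abs_of_pos (by linarith : (0:ℝ) < a₀ - b₀),
          ← Real.rpow_add_one (by linarith : a₀ - b₀ ≠ 0) (p-1)]
        ring_nf
      rw [e1, e2, e3]
      have hA : a₀ ^ (p-1) ≠ 0 := (Real.rpow_pos_of_pos ha₀ _).ne'
      have hB : b₀ ^ (p-1) ≠ 0 := (Real.rpow_pos_of_pos hb₀ _).ne'
      field_simp
      ring
    · intro r s hr hs
      set a := r ^ (1/p) with had
      set b := s ^ (1/p) with hbd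
      have ha : 0 < a := Real.rpow_pos_of_pos hr _
      have hb : 0 < b := Real.rpow_pos_of_pos hs _
      obtain ⟨h1, h2⟩ := core2 hp ha hb ha₀ hb₀ hgt
      have eL : (a₀ - b₀) ^ (p-1) / a₀ ^ (p-1) * r + -((a₀ - b₀) ^ (p-1) / b₀ ^ (p-1)) * s
          = (a₀ - b₀) ^ (p-1) * (a ^ p / a₀ ^ (p-1)) - (a₀ - b₀) ^ (p-1) * (b ^ p / b₀ ^ (p-1)) := by
        rw [← hpow r hr, ← hpow s hs, ← had, ← hbd]; ring
      rw [eL]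
      refine ⟨h1, fun hE => ?_⟩
      have hab := h2 hE
      calc r * s₀ = a ^ p * b₀ ^ p := by rw [hpow r hr, hs₀e]
        _ = (a * b₀) ^ p := (Real.mul_rpow ha.le hb₀.le).symm
        _ = (a₀ * b) ^ p := by rw [hab]
        _ = a₀ ^ p * b ^ p := Real.mul_rpow ha₀.le hb.le
        _ = r₀ * s := by rw [hr₀e, hpow s hs]

theorem alpha_convex (p : ℝ) (hp : 1 < p) :
    ConvexOn ℝ (Ioi (0 : ℝ) ×ˢ Ioi (0 : ℝ))
      (fun rs : ℝ × ℝ => |rs.1 ^ (1 / p) - rs.2 ^ (1 / p)| ^ p) ∧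
    ∀ r₁ r₂ s₁ s₂ : ℝ, 0 < r₁ → 0 < r₂ → 0 < s₁ → 0 < s₂ →
      (|((r₁ + r₂) / 2) ^ (1 / p) - ((s₁ + s₂) / 2) ^ (1 / p)| ^ p ≤
        (1 / 2) * |r₁ ^ (1 / p) - s₁ ^ (1 / p)| ^ p
          + (1 / 2) * |r₂ ^ (1 / p) - s₂ ^ (1 / p)| ^ p) ∧
      (|((r₁ + r₂) / 2) ^ (1 / p) - ((s₁ + s₂) / 2) ^ (1 / p)| ^ p =
        (1 / 2) * |r₁ ^ (1 / p) - s₁ ^ (1 / p)| ^ p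
          + (1 / 2) * |r₂ ^ (1 / p) - s₂ ^ (1 / p)| ^ p →
        r₁ * s₂ = r₂ * s₁) := by
  constructor
  · refine ⟨(convex_Ioi (0:ℝ)).prod (convex_Ioi 0), ?_⟩
    intro x hx y hy a b ha hb hab
    rcases eq_or_lt_of_le ha with h0 | ha'
    · have hb1 : b = 1 := by linarith
      rw [← h0, hb1]
      simp
    rcases eq_or_lt_of_le hb with h0 | hb'
    · have ha1 : a = 1 := by linarith
      rw [← h0, ha1]
      simp
    have hx1 : 0 < x.1 := hx.1
    have hx2 : 0 < x.2 := hx.2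
    have hy1 : 0 < y.1 := hy.1
    have hy2 : 0 < y.2 := hy.2
    have hz1 : (a • x + b • y).1 = a * x.1 + b * y.1 := rfl
    have hz2 : (a • x + b • y).2 = a * x.2 + b * y.2 := rfl
    have hz1p : 0 < a * x.1 + b * y.1 := by positivity
    have hz2p : 0 < a * x.2 + b * y.2 := by positivity
    obtain ⟨A, B, hE, hS⟩ := exists_support hp hz1p hz2p
    simp only [smul_eq_mul, hz1, hz2]
    calc |(a * x.1 + b * y.1) ^ (1/p) - (a * x.2 + b * y.2) ^ (1/p)| ^ p
        = A * (a * x.1 + b * y.1) + B * (a * x.2 + b * y.2) := hE.symm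
      _ = a * (A * x.1 + B * x.2) + b * (A * y.1 + B * y.2) := by ring
      _ ≤ a * |x.1 ^ (1/p) - x.2 ^ (1/p)| ^ p + b * |y.1 ^ (1/p) - y.2 ^ (1/p)| ^ p := by
          have u1 := (hS x.1 x.2 hx1 hx2).1
          have u2 := (hS y.1 y.2 hy1 hy2).1
          have := mul_le_mul_of_nonneg_left u1 ha'.le
          have := mul_le_mul_of_nonneg_left u2 hb'.le
          linarith
  · intro r₁ r₂ s₁ s₂ h1 h2 h3 h4
    have hm1 : 0 < (r₁ + r₂) / 2 := by linarith
    have hm2 : 0 < (s₁ + s₂) / 2 := by linarith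
    obtain ⟨A, B, hE, hS⟩ := exists_support hp hm1 hm2
    obtain ⟨hle1, heq1⟩ := hS r₁ s₁ h1 h3
    obtain ⟨hle2, heq2⟩ := hS r₂ s₂ h2 h4
    have hmid : A * ((r₁ + r₂) / 2) + B * ((s₁ + s₂) / 2)
        = (1/2) * (A * r₁ + B * s₁) + (1/2) * (A * r₂ + B * s₂) := by ring
    constructor
    · rw [← hE, hmid]; linarith
    · intro hEq
      have e1 : A * r₁ + B * s₁ = |r₁ ^ (1/p) - s₁ ^ (1/p)| ^ p := by linarith
      have := heq1 e1
      linear_combination 2 * this
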